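/- Let R be a covering trace for S that contains no boxes, and let A be a shortest-path tree in R from the root (1,1) to all the points (βx, βy) with (x,y) ∈ S. Then A, translated by (−1,−1), is a rectilinear Steiner arborescence for the translated scaled sink set {(βx−1, βy−1) : (x,y) ∈ S}; in particular, this set has a rectilinear Steiner arborescence of length at most cost(R)/2. -/

import Mathlib

open Set

noncomputable section

/-- A point in the plane. -/
abbrev Pt := ℝ × ℝ

/-! ### Rectilinear trees and rectilinear Steiner arborescences -/

/-- An axis-parallel (horizontal or vertical) closed line segment in the plane. -/
structure Seg where
  p : Pt
  q : Pt
  ne : p ≠ q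
  axis : p.1 = q.1 ∨ p.2 = q.2

noncomputable instance : DecidableEq Seg := Classical.decEq _

namespace Seg

/-- The set of points of a segment. -/
def set (s : Seg) : Set Pt := segment ℝ s.p s.q

/-- The length of an axis-parallel segment. -/
def length (s : Seg) : ℝ := |s.q.1 - s.p.1| + |s.q.2 - s.p.2|

/-- The two endpoints of a segment. -/
def endpoints (s : Seg) : Set Pt := {s.p, s.q}

/-- Translating a segment by a vector. -/
def translate (v : Pt) (s : Seg) : Seg where
  p := s.p + v
  q := s.q + v
  ne := fun h => s.ne (by
    have := congrArg (fun w => w - v) h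
    simpa using this)
  axis := by
    rcases s.axis with h | h
    · left; simpa using h
    · right; simpa using h

end Seg

/-- A monotone (north/east going) path from `a` to `b` inside the set `A`. -/
def MonoPathIn (A : Set Pt) (a b : Pt) : Prop :=
  ∃ f : ℝ → Pt, ContinuousOn f (Set.Icc 0 1) ∧ f 0 = a ∧ f 1 = b ∧
    (∀ t ∈ Set.Icc (0:ℝ) 1, f t ∈ A) ∧
    MonotoneOn (fun t => (f t).1) (Set.Icc (0:ℝ) 1) ∧
    MonotoneOn (fun t => (f t).2) (Set.Icc (0:ℝ) 1)

/-- A rectilinear tree: a connected, acyclic (simply connected) collection of horizontal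
and vertical segments that intersect only at their endpoints. -/
structure RectTree where
  segs : Finset Seg
  inter : ∀ s ∈ segs, ∀ t ∈ segs, s ≠ t →
    Seg.set s ∩ Seg.set t ⊆ Seg.endpoints s ∩ Seg.endpoints t
  conn : IsConnected (⋃ s ∈ segs, Seg.set s)
  acyclic : SimplyConnectedSpace ↥(⋃ s ∈ segs, Seg.set s)

namespace RectTree

/-- The union of all segments of a rectilinear tree. -/
def carrier (T : RectTree) : Set Pt := ⋃ s ∈ T.segs, Seg.set s

/-- The total length of a rectilinear tree. -/
def length (T : RectTree) : ℝ := ∑ s ∈ T.segs, Seg.length s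

/-- A leaf of a rectilinear tree: a point that is an endpoint of exactly one segment
and lies on no other segment. -/
def IsLeaf (T : RectTree) (v : Pt) : Prop :=
  (∃! s, s ∈ T.segs ∧ v ∈ Seg.endpoints s) ∧
  ∀ s ∈ T.segs, v ∈ Seg.set s → v ∈ Seg.endpoints s

end RectTree

/-- `T` is a rectilinear Steiner arborescence with root `root` for the set `S` of sinks:
`T` is rooted at `root`, each leaf of `T` lies at a sink, and each sink is connected to the
root by a monotone (north/east) path in `T` (equivalently, the path in the tree from the
root to the sink `(x,y)` has length exactly `|x - root.x| + |y - root.y|`). -/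
def IsRSA (T : RectTree) (root : Pt) (S : Set Pt) : Prop :=
  root ∈ T.carrier ∧
  (∀ v : Pt, T.IsLeaf v → v ≠ root → v ∈ S) ∧
  ∀ s ∈ S, MonoPathIn T.carrier root s

/-- The Hanan grid of a planar point set: the union of all horizontal and vertical
lines through the points of the set. -/
def hananGrid (P : Set Pt) : Set Pt := {q | ∃ p ∈ P, q.1 = p.1 ∨ q.2 = p.2}

/-- The planar point with the given nonnegative integer coordinates. -/
def toPt (p : ℕ × ℕ) : Pt := ((p.1 : ℝ), (p.2 : ℝ))
/-! ### Simple polygons, triangulations and flips -/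

/-- The cyclic successor of an index. -/
def nextIdx {n : ℕ} (i : Fin n) : Fin n := ⟨((i : ℕ) + 1) % n, Nat.mod_lt _ i.pos⟩

/-- A simple polygon, given by the cyclic sequence of its vertices; the boundary edges
intersect only at shared endpoints. -/
structure SimplePolygon (n : ℕ) where
  hn : 3 ≤ n
  V : Fin n → Pt
  inj : Function.Injective V
  simple : ∀ i j : Fin n, i ≠ j →
    segment ℝ (V i) (V (nextIdx i)) ∩ segment ℝ (V j) (V (nextIdx j)) ⊆
      ({V i, V (nextIdx i)} ∩ {V j, V (nextIdx j)} : Set Pt)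

/-- The boundary of a simple polygon: the union of its edges. -/
def polyBoundary {n : ℕ} (P : SimplePolygon n) : Set Pt :=
  ⋃ i : Fin n, segment ℝ (P.V i) (P.V (nextIdx i))

/-- The interior of a simple polygon: the union of the bounded connected components of the
complement of its boundary. -/
def polyInterior {n : ℕ} (P : SimplePolygon n) : Set Pt :=
  {x | x ∉ polyBoundary P ∧ Bornology.IsBounded (connectedComponentIn (polyBoundary P)ᶜ x)}

/-- The closed region bounded by a simple polygon. -/
def polyRegion {n : ℕ} (P : SimplePolygon n) : Set Pt := polyBoundary P ∪ polyInterior P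

/-- `(i, j)` spans a diagonal of the polygon `P`: the two vertices are distinct and
non-adjacent, and the open segment between them lies in the interior of `P`. -/
def IsDiag {n : ℕ} (P : SimplePolygon n) (i j : Fin n) : Prop :=
  i ≠ j ∧ j ≠ nextIdx i ∧ i ≠ nextIdx j ∧
  openSegment ℝ (P.V i) (P.V j) ⊆ polyInterior P

/-- A triangulation of a simple polygon: a maximal set of pairwise non-crossing diagonals.
Diagonals are recorded as ordered pairs `(i, j)` with `i < j`. -/
structure Triangulation {n : ℕ} (P : SimplePolygon n) where
  diags : Finset (Fin n × Fin n)
  ordered : ∀ e ∈ diags, e.1 < e.2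
  diag : ∀ e ∈ diags, IsDiag P e.1 e.2
  noncross : ∀ e ∈ diags, ∀ f ∈ diags, e ≠ f →
    openSegment ℝ (P.V e.1) (P.V e.2) ∩ openSegment ℝ (P.V f.1) (P.V f.2) = ∅
  maximal : ∀ i j : Fin n, IsDiag P i j → i < j → (i, j) ∉ diags →
    ∃ f ∈ diags, (openSegment ℝ (P.V i) (P.V j) ∩ openSegment ℝ (P.V f.1) (P.V f.2)).Nonempty

/-- Two triangulations of `P` differ by a single flip: one diagonal is exchanged for another. -/
def IsFlip {n : ℕ} {P : SimplePolygon n} (T T' : Triangulation P) : Prop :=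
  ∃ d e : Fin n × Fin n, d ∈ T.diags ∧ e ∉ T.diags ∧ T'.diags = insert e (T.diags.erase d)

/-- There is a sequence of `k` flips transforming `T` into `T'`. -/
def FlipSeqLen {n : ℕ} {P : SimplePolygon n} (T T' : Triangulation P) (k : ℕ) : Prop :=
  ∃ σ : Fin (k+1) → Triangulation P, σ 0 = T ∧ σ (Fin.last k) = T' ∧
    ∀ i : Fin k, IsFlip (σ i.castSucc) (σ i.succ)

/-- The flip distance between two triangulations of a simple polygon: the minimum number of
flips needed to transform one into the other (`⊤` if there is no such sequence). -/
def flipDist {n : ℕ} {P : SimplePolygon n} (T T' : Triangulation P) : ℕ∞ :=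
  sInf {l : ℕ∞ | ∃ k : ℕ, FlipSeqLen T T' k ∧ (k : ℕ∞) = l}

/-- The number of diagonals of `T` incident to the vertex `v`. -/
def degreeAt {n : ℕ} {P : SimplePolygon n} (T : Triangulation P) (v : Fin n) : ℕ :=
  (T.diags.filter (fun e => e.1 = v ∨ e.2 = v)).card

/-- The vertex `v` has maximum degree in the triangulation `T`. -/
def maxDegAt {n : ℕ} {P : SimplePolygon n} (T : Triangulation P) (v : Fin n) : Prop :=
  ∀ w : Fin n, degreeAt T w ≤ degreeAt T v

/-- `a` and `b` are joined by an edge of the triangulation `T` (a diagonal or a boundary edge). -/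
def IsEdgeOf {n : ℕ} {P : SimplePolygon n} (T : Triangulation P) (a b : Fin n) : Prop :=
  a ≠ b ∧ ((a, b) ∈ T.diags ∨ (b, a) ∈ T.diags ∨ b = nextIdx a ∨ a = nextIdx b)

/-- `a`, `b`, `c` form a triangle of the triangulation `T`. -/
def IsTriangleOf {n : ℕ} {P : SimplePolygon n} (T : Triangulation P) (a b c : Fin n) : Prop :=
  IsEdgeOf T a b ∧ IsEdgeOf T b c ∧ IsEdgeOf T a c
/-! ### Double chains -/

/-- Four points are in convex position (they form a convex quadrilateral). -/
def ConvexPos4 (a b c d : Pt) : Prop :=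
  a ∉ convexHull ℝ ({b, c, d} : Set Pt) ∧ b ∉ convexHull ℝ ({a, c, d} : Set Pt) ∧
  c ∉ convexHull ℝ ({a, b, d} : Set Pt) ∧ d ∉ convexHull ℝ ({a, b, c} : Set Pt)

/-- The cross product `(b - a) × (q - a)`, determining the position of `q`
relative to the directed line from `a` to `b`. -/
def cross2 (a b q : Pt) : ℝ := (b.1 - a.1) * (q.2 - a.2) - (b.2 - a.2) * (q.1 - a.1)

/-- The closed half-plane below (to the right of) the directed line from `a` to `b`. -/
def belowLine (a b : Pt) : Set Pt := {q | cross2 a b q ≤ 0}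

/-- The closed half-plane above (to the left of) the directed line from `a` to `b`. -/
def aboveLine (a b : Pt) : Set Pt := {q | 0 ≤ cross2 a b q}

/-- `q` lies strictly to the right of the directed line from `a` to `b`. -/
def rightOf (a b q : Pt) : Prop := cross2 a b q < 0

/-- The line through the two points `a` and `b`. -/
def lineThrough (a b : Pt) : Set Pt := {q | cross2 a b q = 0}

/-- The vertex sequence `⟨l_1, …, l_n, u_n, …, u_1⟩` of the polygon `P_D` of a double chain. -/
def dcSeq {n : ℕ} (l u : Fin n → Pt) : Fin (2*n) → Pt := fun i =>
  if h : (i : ℕ) < n then l ⟨i, h⟩ else u ⟨2*n - 1 - (i : ℕ), by omega⟩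

/-- A double chain with `n` vertices `u_1, …, u_n` on the upper chain and `l_1, …, l_n` on the
lower chain, both numbered from left to right: every point of one chain sees every point of the
other chain (within the polygon `P_D`), and any quadrilateral formed by three vertices of one
chain and one vertex of the other chain is non-convex.  `poly` is the polygon `P_D` with
vertex sequence `⟨l_1, …, l_n, u_n, …, u_1⟩`. -/
structure DoubleChain (n : ℕ) where
  hn : 2 ≤ n
  u : Fin n → Pt
  l : Fin n → Pt
  mono_u : StrictMono fun i => (u i).1
  mono_l : StrictMono fun i => (l i).1
  poly : SimplePolygon (2*n)
  hpoly : poly.V = dcSeq l u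
  visible : ∀ i j : Fin n, openSegment ℝ (u i) (l j) ⊆ polyRegion poly
  nonconvex_u : ∀ i j k : Fin n, i < j → j < k → ∀ w : Fin n,
    ¬ ConvexPos4 (u i) (u j) (u k) (l w)
  nonconvex_l : ∀ i j k : Fin n, i < j → j < k → ∀ w : Fin n,
    ¬ ConvexPos4 (l i) (l j) (l k) (u w)

/-- The flip-kernel of a double chain: the intersection of the closed half-planes below the
lines through `u_1 u_2` and `u_{n-1} u_n` and above the lines through `l_1 l_2` and
`l_{n-1} l_n`. -/
def flipKernel {n : ℕ} (D : DoubleChain n) : Set Pt :=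
  belowLine (D.u ⟨0, by have := D.hn; omega⟩) (D.u ⟨1, by have := D.hn; omega⟩) ∩
  belowLine (D.u ⟨n-2, by have := D.hn; omega⟩) (D.u ⟨n-1, by have := D.hn; omega⟩) ∩
  aboveLine (D.l ⟨0, by have := D.hn; omega⟩) (D.l ⟨1, by have := D.hn; omega⟩) ∩
  aboveLine (D.l ⟨n-2, by have := D.hn; omega⟩) (D.l ⟨n-1, by have := D.hn; omega⟩)

/-- The union of those open wedges (connected components of the complement of the union of the
two given lines) whose interior avoids the forbidden set `forb` but meets the segment from
`a` to `b`. -/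
def wedgeComponents (L : Set Pt) (a b : Pt) (forb : Set Pt) : Set Pt :=
  ⋃₀ {C : Set Pt | (∃ x ∉ L, C = connectedComponentIn Lᶜ x) ∧
      (C ∩ segment ℝ a b).Nonempty ∧ C ∩ forb = ∅}

/-- The hourglass `W = W_1 ∪ W_n` of a double chain: `W_1` is the wedge defined by the lines
through `u_1 u_2` and `l_1 l_2` whose interior contains no point of the double chain but
meets the segment `u_1 l_1`, and `W_n` is defined analogously at the other end. -/
def hourglass {n : ℕ} (D : DoubleChain n) : Set Pt :=
  wedgeComponents
    (lineThrough (D.u ⟨0, by have := D.hn; omega⟩) (D.u ⟨1, by have := D.hn; omega⟩) ∪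
     lineThrough (D.l ⟨0, by have := D.hn; omega⟩) (D.l ⟨1, by have := D.hn; omega⟩))
    (D.u ⟨0, by have := D.hn; omega⟩) (D.l ⟨0, by have := D.hn; omega⟩)
    (Set.range D.u ∪ Set.range D.l) ∪
  wedgeComponents
    (lineThrough (D.u ⟨n-1, by have := D.hn; omega⟩) (D.u ⟨n-2, by have := D.hn; omega⟩) ∪
     lineThrough (D.l ⟨n-1, by have := D.hn; omega⟩) (D.l ⟨n-2, by have := D.hn; omega⟩))
    (D.u ⟨n-1, by have := D.hn; omega⟩) (D.l ⟨n-1, by have := D.hn; omega⟩)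
    (Set.range D.u ∪ Set.range D.l)

/-- The vertex sequence `⟨l_1, …, l_n, z, u_n, …, u_1⟩` of the polygon `P_D^z` obtained from a
double chain by adding an extra vertex `z` between `l_n` and `u_n`. -/
def dcpSeq {n : ℕ} (l u : Fin n → Pt) (z : Pt) : Fin (2*n+1) → Pt := fun i =>
  if h : (i : ℕ) < n then l ⟨i, h⟩
  else if _h' : (i : ℕ) = n then z
  else u ⟨2*n - (i : ℕ), by omega⟩

/-- The embedding of the vertices of a double chain polygon (in the order
`⟨l_1, …, l_n, u_n, …, u_1⟩`) into the vertices of an ambient polygon, given the positions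
`f i` of `l_{i+1}` and `g i` of `u_{i+1}`. -/
def dcEmbed {n Np : ℕ} (f g : Fin n → Fin Np) : Fin (2*n) → Fin Np := fun i =>
  if h : (i : ℕ) < n then f ⟨i, h⟩ else g ⟨2*n - 1 - (i : ℕ), by omega⟩
/-! ### Chain paths -/

/-- The chain path of a triangulation of the polygon `P_D^+` (a double chain with `m` vertices on
each chain, plus an extra vertex `z`): the set of grid points `(v, w)` such that `u_v l_w` is a
chain edge of the triangulation.  The boundary edge `u_1 l_1` contributes the point `(1,1)`. -/
def chainPathOf {m : ℕ} {Q : SimplePolygon (2*m+1)} (T : Triangulation Q) : Finset (ℕ × ℕ) :=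
  insert (1, 1)
    ((T.diags.filter (fun e => (e.1 : ℕ) < m ∧ m + 1 ≤ (e.2 : ℕ))).image
      (fun e => (2*m + 1 - (e.2 : ℕ), (e.1 : ℕ) + 1)))

/-- `C` is the vertex set of an `x`- and `y`-monotone lattice path in the `m × m` grid starting
at `(1,1)`. -/
def IsChainPath (m : ℕ) (C : Finset (ℕ × ℕ)) : Prop :=
  ∃ (k : ℕ) (f : Fin (k+1) → ℕ × ℕ), f 0 = (1, 1) ∧
    (∀ i : Fin k, f i.succ = ((f i.castSucc).1 + 1, (f i.castSucc).2) ∨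
                  f i.succ = ((f i.castSucc).1, (f i.castSucc).2 + 1)) ∧
    (∀ i, (f i).1 ≤ m ∧ (f i).2 ≤ m) ∧
    C = Finset.image f Finset.univ

/-- `p` is the endpoint (the dominant vertex) of the monotone lattice path `C`. -/
def IsPathEnd (C : Finset (ℕ × ℕ)) (p : ℕ × ℕ) : Prop :=
  p ∈ C ∧ ∀ c ∈ C, c.1 ≤ p.1 ∧ c.2 ≤ p.2

/-- The monotone lattice path `C'` is obtained from `C` by moving the endpoint one unit north or
east. -/
def PathExtend (C C' : Finset (ℕ × ℕ)) : Prop :=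
  ∃ p q : ℕ × ℕ, IsPathEnd C p ∧ (q = (p.1 + 1, p.2) ∨ q = (p.1, p.2 + 1)) ∧ q ∉ C ∧
    C' = insert q C

/-- The monotone lattice path `C'` is obtained from `C` by changing an east-north bend into a
north-east bend (or vice versa) at the unit box with lower-left corner `c`. -/
def BendSwapAt (c : ℕ × ℕ) (C C' : Finset (ℕ × ℕ)) : Prop :=
  (c.1, c.2) ∈ C ∧ (c.1 + 1, c.2 + 1) ∈ C ∧
    (((c.1 + 1, c.2) ∈ C ∧ (c.1, c.2 + 1) ∉ C ∧
        C' = insert (c.1, c.2 + 1) (C.erase (c.1 + 1, c.2))) ∨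
     ((c.1, c.2 + 1) ∈ C ∧ (c.1 + 1, c.2) ∉ C ∧
        C' = insert (c.1 + 1, c.2) (C.erase (c.1, c.2 + 1))))

/-- The monotone lattice path `C'` is obtained from `C` by swapping a bend. -/
def BendSwap (C C' : Finset (ℕ × ℕ)) : Prop := ∃ c, BendSwapAt c C C'
/-! ### The polygon `P_D^+` for a set of sinks -/

/-- The setting of the reduction: a set `S` of `N` sinks with coordinates in `{1, …, n}²`
(sorted by their pairwise distinct `y`-coordinates), the big double chain `D` with
`m = β·n = 2·N·n` vertices on each chain whose flip-kernel contains a point `z` to the right of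
the directed line `l_m u_m`, and the polygon `Q = P_D^+ = ⟨l_1, …, l_m, z, u_m, …, u_1⟩`. -/
structure PlusSetup (n N : ℕ) where
  hn2 : 2 ≤ n
  hN : 1 ≤ N
  S : Fin N → ℕ × ℕ
  hSx : ∀ i, 1 ≤ (S i).1 ∧ (S i).1 ≤ n
  hSy1 : ∀ i, 1 ≤ (S i).2 ∧ (S i).2 < n
  hSy : StrictMono fun i => (S i).2
  hSxpf : ∀ i, 2*N*(S i).1 ≤ 2*N*n
  hSpf : ∀ i, 2*N*(S i).2 + 2*N ≤ 2*N*n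
  D : DoubleChain (2*N*n)
  z : Pt
  hz1 : z ∈ flipKernel D
  hz2 : rightOf (D.l ⟨2*N*n - 1, by have := D.hn; omega⟩)
                (D.u ⟨2*N*n - 1, by have := D.hn; omega⟩) z
  Q : SimplePolygon (2*(2*N*n)+1)
  hQ : Q.V = dcpSeq D.l D.u z

/-- The flip sequence `σ` on `P_D^+` visits the sink `S i = (x, y)`: some triangulation of the
sequence contains the chain triangle `u_{βx} l_{βy} l_{βy+1}` (where `β = 2N`). -/
def visitsSink {n N : ℕ} (PS : PlusSetup n N) {k : ℕ}
    (σ : Fin (k+1) → Triangulation PS.Q) (i : Fin N) : Prop :=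
  ∃ t : Fin (k+1),
    IsTriangleOf (σ t)
      ⟨2*N*(PS.S i).2 - 1, by have := PS.hSpf i; omega⟩
      ⟨2*N*(PS.S i).2, by have := PS.hSpf i; have := PS.hN; omega⟩
      ⟨2*(2*N*n) - 2*N*(PS.S i).1 + 1, by
        have h1 : 0 < 2*N*(PS.S i).1 :=
          Nat.mul_pos (by have := PS.hN; omega) (PS.hSx i).1
        have h2 : 0 < 2*N*n := Nat.mul_pos (by have := PS.hN; omega) (by have := PS.hn2; omega)
        omega⟩

/-- A flip traversal for the set of sinks: a flip sequence on `P_D^+` that begins and ends at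
the triangulation whose chain path has its endpoint at the root `(1,1)`, and that visits every
sink. -/
def IsFlipTraversal {n N : ℕ} (PS : PlusSetup n N) {k : ℕ}
    (σ : Fin (k+1) → Triangulation PS.Q) : Prop :=
  (∀ i : Fin k, IsFlip (σ i.castSucc) (σ i.succ)) ∧
  chainPathOf (σ 0) = {(1, 1)} ∧
  chainPathOf (σ (Fin.last k)) = {(1, 1)} ∧
  ∀ i : Fin N, visitsSink PS σ i
/-! ### The polygon `P_D^*` with sink gadgets -/

/-- The number of vertices of `P_D^*`: `2m + 1 + N(2d - 2)` with `m = 2Nn` and `d = nN`. -/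
def Mc (n N : ℕ) : ℕ := 2*N*n + (2*(n*N) - 2)*N + 1 + 2*N*n

/-- The number of sink gadgets inserted strictly before the lower-chain vertex with
(0-based) index `j`. -/
def cntBelow (N : ℕ) (S : Fin N → ℕ × ℕ) (j : ℕ) : ℕ :=
  (Finset.univ.filter (fun i : Fin N => 2*N*(S i).2 ≤ j)).card

theorem cntBelow_le (N : ℕ) (S : Fin N → ℕ × ℕ) (j : ℕ) : cntBelow N S j ≤ N :=
  le_trans (Finset.card_filter_le _ _) (by simp)

/-- The position of the lower-chain vertex `l_{j+1}` of `D` among the vertices of `P_D^*`. -/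
def posL (n N : ℕ) (S : Fin N → ℕ × ℕ) (j : Fin (2*N*n)) : Fin (Mc n N) :=
  ⟨(j : ℕ) + (2*(n*N) - 2) * cntBelow N S (j : ℕ), by
    have h1 : cntBelow N S (j : ℕ) ≤ N := cntBelow_le N S (j : ℕ)
    have h2 := Nat.mul_le_mul_left (2*(n*N) - 2) h1
    have h3 := j.isLt
    unfold Mc
    omega⟩

/-- The position of the vertex `z` among the vertices of `P_D^*`. -/
def posZ (n N : ℕ) : Fin (Mc n N) := ⟨2*N*n + (2*(n*N) - 2)*N, by unfold Mc; omega⟩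

/-- The position of the upper-chain vertex `u_{j+1}` of `D` among the vertices of `P_D^*`. -/
def posU (n N : ℕ) (j : Fin (2*N*n)) : Fin (Mc n N) :=
  ⟨Mc n N - 1 - (j : ℕ), by unfold Mc; omega⟩

/-- The position of the `(t+1)`-st interior vertex (in boundary order) of the sink gadget of the
`ii`-th sink (whose `y`-coordinate is `yi`) among the vertices of `P_D^*`. -/
def posG (n N yi ii t : ℕ) (hyi : 2*N*yi + 2*N ≤ 2*N*n) (hii : ii < N)
    (ht : t < 2*(n*N) - 2) : Fin (Mc n N) :=
  ⟨2*N*yi + (2*(n*N) - 2)*ii + t, by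
    have h3 := Nat.mul_le_mul_left (2*(n*N) - 2) (show ii + 1 ≤ N by omega)
    rw [Nat.mul_add, Nat.mul_one] at h3
    unfold Mc
    omega⟩

/-- The full construction of the polygon `P_D^*` from a set `S` of `N` sinks on the `n × n` grid
(with `β = 2N`, `d = nN`, `m = βn`), together with the source triangulation `T1` and the target
triangulation `T2`.  The sink gadget of the `i`-th sink `(x, y)` is a double chain `G i` with
`d` vertices on each chain replacing the edge `l_{βy} l_{βy+1}`; its last lower-chain vertex is
`l_{βy}`, its last upper-chain vertex is `l_{βy+1}`, and `u_{βx}` is the only vertex of `P_D^*`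
inside its hourglass and lies in its flip-kernel.  `T1` triangulates the `P_D^+` part with all
diagonals incident to `z` and every gadget with its upper extreme triangulation; `T2` is the
same except that every gadget carries its lower extreme triangulation. -/
structure StarConstruction (n N : ℕ) extends PlusSetup n N where
  P : SimplePolygon (Mc n N)
  hPL : ∀ j : Fin (2*N*n), P.V (posL n N toPlusSetup.S j) = toPlusSetup.D.l j
  hPz : P.V (posZ n N) = toPlusSetup.z
  hPU : ∀ j : Fin (2*N*n), P.V (posU n N j) = toPlusSetup.D.u j
  G : Fin N → DoubleChain (n*N)
  hGl : ∀ i : Fin N, (G i).l ⟨n*N - 1, by have := (G i).hn; omega⟩ =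
    toPlusSetup.D.l ⟨2*N*(toPlusSetup.S i).2 - 1, by have := toPlusSetup.hSpf i; have := toPlusSetup.D.hn; omega⟩
  hGu : ∀ i : Fin N, (G i).u ⟨n*N - 1, by have := (G i).hn; omega⟩ =
    toPlusSetup.D.l ⟨2*N*(toPlusSetup.S i).2, by have := toPlusSetup.hSpf i; have := hN; omega⟩
  hPGl : ∀ (i : Fin N) (t : Fin (n*N - 1)),
    P.V (posG n N (toPlusSetup.S i).2 i t (hSpf i) i.isLt
      (by have := (G i).hn; have := t.isLt; omega)) =
    (G i).l ⟨n*N - 2 - (t : ℕ), by have := (G i).hn; omega⟩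
  hPGu : ∀ (i : Fin N) (t : Fin (n*N - 1)),
    P.V (posG n N (toPlusSetup.S i).2 i ((n*N - 1) + (t : ℕ)) (hSpf i) i.isLt
      (by have := (G i).hn; have := t.isLt; omega)) =
    (G i).u ⟨(t : ℕ), by have := t.isLt; omega⟩
  hGhour : ∀ i : Fin N,
    toPlusSetup.D.u ⟨2*N*(toPlusSetup.S i).1 - 1, by have := toPlusSetup.hSxpf i; have := toPlusSetup.D.hn; omega⟩ ∈ hourglass (G i)
  hGonly : ∀ (i : Fin N) (v : Fin (Mc n N)),
    P.V v ≠ toPlusSetup.D.u ⟨2*N*(toPlusSetup.S i).1 - 1, by have := toPlusSetup.hSxpf i; have := toPlusSetup.D.hn; omega⟩ →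
    P.V v ∉ hourglass (G i)
  hGkern : ∀ i : Fin N,
    toPlusSetup.D.u ⟨2*N*(toPlusSetup.S i).1 - 1, by have := toPlusSetup.hSxpf i; have := toPlusSetup.D.hn; omega⟩ ∈ flipKernel (G i)
  T1 : Triangulation P
  hT1 : ∀ a b : Fin (Mc n N), (a, b) ∈ T1.diags ↔
    ((∃ j : Fin (2*N*n), (j : ℕ) + 2 ≤ 2*N*n ∧ a = posL n N toPlusSetup.S j ∧ b = posZ n N) ∨
     (∃ j : Fin (2*N*n), (j : ℕ) + 2 ≤ 2*N*n ∧ a = posZ n N ∧ b = posU n N j) ∨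
     (∃ i : Fin N,
       a = posL n N toPlusSetup.S ⟨2*N*(toPlusSetup.S i).2 - 1, by have := toPlusSetup.hSpf i; have := toPlusSetup.D.hn; omega⟩ ∧
       b = posL n N toPlusSetup.S ⟨2*N*(toPlusSetup.S i).2, by have := toPlusSetup.hSpf i; have := hN; omega⟩) ∨
     (∃ (i : Fin N) (t : ℕ) (ht : t + 3 ≤ n*N),
       a = posG n N (toPlusSetup.S i).2 i t (hSpf i) i.isLt (by omega) ∧
       b = posG n N (toPlusSetup.S i).2 i (n*N - 1) (hSpf i) i.isLt (by have := (G i).hn; omega)) ∨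
     (∃ (i : Fin N) (t : ℕ) (ht : n*N - 1 ≤ t ∧ t ≤ 2*(n*N) - 3),
       a = posL n N toPlusSetup.S ⟨2*N*(toPlusSetup.S i).2 - 1, by have := toPlusSetup.hSpf i; have := toPlusSetup.D.hn; omega⟩ ∧
       b = posG n N (toPlusSetup.S i).2 i t (hSpf i) i.isLt (by have := (G i).hn; omega)))
  T2 : Triangulation P
  hT2 : ∀ a b : Fin (Mc n N), (a, b) ∈ T2.diags ↔
    ((∃ j : Fin (2*N*n), (j : ℕ) + 2 ≤ 2*N*n ∧ a = posL n N toPlusSetup.S j ∧ b = posZ n N) ∨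
     (∃ j : Fin (2*N*n), (j : ℕ) + 2 ≤ 2*N*n ∧ a = posZ n N ∧ b = posU n N j) ∨
     (∃ i : Fin N,
       a = posL n N toPlusSetup.S ⟨2*N*(toPlusSetup.S i).2 - 1, by have := toPlusSetup.hSpf i; have := toPlusSetup.D.hn; omega⟩ ∧
       b = posL n N toPlusSetup.S ⟨2*N*(toPlusSetup.S i).2, by have := toPlusSetup.hSpf i; have := hN; omega⟩) ∨
     (∃ (i : Fin N) (t : ℕ) (ht : n*N ≤ t ∧ t ≤ 2*(n*N) - 3),
       a = posG n N (toPlusSetup.S i).2 i (n*N - 2) (hSpf i) i.isLt (by have := (G i).hn; omega) ∧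
       b = posG n N (toPlusSetup.S i).2 i t (hSpf i) i.isLt (by have := (G i).hn; omega)) ∨
     (∃ (i : Fin N) (t : ℕ) (ht : t ≤ n*N - 2),
       a = posG n N (toPlusSetup.S i).2 i t (hSpf i) i.isLt (by have := (G i).hn; omega) ∧
       b = posL n N toPlusSetup.S ⟨2*N*(toPlusSetup.S i).2, by have := toPlusSetup.hSpf i; have := hN; omega⟩))

/-- The points of the sink set `S` of a construction, as points of the plane. -/
def sinkPts {n N : ℕ} (C : StarConstruction n N) : Set Pt :=
  Set.range fun i => toPt (C.S i)
/-! ### Traces -/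

/-- The set of points of a unit grid edge: `e = (p, true)` is the horizontal edge from `p` to
`p + (1,0)`, and `e = (p, false)` is the vertical edge from `p` to `p + (0,1)`. -/
def gridEdgeSet (e : (ℕ × ℕ) × Bool) : Set Pt :=
  if e.2 then segment ℝ ((e.1.1 : ℝ), (e.1.2 : ℝ)) ((e.1.1 : ℝ) + 1, (e.1.2 : ℝ))
  else segment ℝ ((e.1.1 : ℝ), (e.1.2 : ℝ)) ((e.1.1 : ℝ), (e.1.2 : ℝ) + 1)

/-- The set of points of the closed unit box with lower-left corner `c`. -/
def boxSet (c : ℕ × ℕ) : Set Pt :=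
  {p | (c.1 : ℝ) ≤ p.1 ∧ p.1 ≤ (c.1 : ℝ) + 1 ∧ (c.2 : ℝ) ≤ p.2 ∧ p.2 ≤ (c.2 : ℝ) + 1}

/-- The union of the points of the given grid edges and boxes. -/
def traceCarrier (E : Finset ((ℕ × ℕ) × Bool)) (B : Finset (ℕ × ℕ)) : Set Pt :=
  (⋃ e ∈ E, gridEdgeSet e) ∪ ⋃ c ∈ B, boxSet c

/-- A trace on the `m × m` grid: a union of unit grid edges and unit boxes (with positive
integer coordinates) that is topologically connected, contains the root `(1,1)`, and in which
every grid point has a monotone path to the root inside the trace. -/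
structure Trace (m : ℕ) where
  edges : Finset ((ℕ × ℕ) × Bool)
  boxes : Finset (ℕ × ℕ)
  hedges : ∀ e ∈ edges, 1 ≤ e.1.1 ∧ 1 ≤ e.1.2 ∧
    (if e.2 then e.1.1 + 1 ≤ m ∧ e.1.2 ≤ m else e.1.1 ≤ m ∧ e.1.2 + 1 ≤ m)
  hboxes : ∀ c ∈ boxes, 1 ≤ c.1 ∧ 1 ≤ c.2 ∧ c.1 + 1 ≤ m ∧ c.2 + 1 ≤ m
  conn : IsConnected (traceCarrier edges boxes)
  root_mem : ((1 : ℝ), (1 : ℝ)) ∈ traceCarrier edges boxes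
  mono : ∀ p : ℕ × ℕ, ((p.1 : ℝ), (p.2 : ℝ)) ∈ traceCarrier edges boxes →
    MonoPathIn (traceCarrier edges boxes) ((1 : ℝ), (1 : ℝ)) ((p.1 : ℝ), (p.2 : ℝ))

namespace Trace

/-- The set of points of a trace. -/
def carrier {m : ℕ} (R : Trace m) : Set Pt := traceCarrier R.edges R.boxes

/-- The number of boundary sides of the box `c` in the collection of boxes `B`: the number of
sides of `c` that are not contained in another box of `B`. -/
def boundarySides (B : Finset (ℕ × ℕ)) (c : ℕ × ℕ) : ℕ :=
  (if (c.1 + 1, c.2) ∈ B then 0 else 1) + (if (c.1 - 1, c.2) ∈ B then 0 else 1) +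
  (if (c.1, c.2 + 1) ∈ B then 0 else 1) + (if (c.1, c.2 - 1) ∈ B then 0 else 1)

/-- The cost of a trace: each edge costs `2`, and each box costs `1` plus its number of
boundary sides. -/
def cost {m : ℕ} (R : Trace m) : ℕ :=
  2 * R.edges.card + ∑ c ∈ R.boxes, (1 + boundarySides R.boxes c)

/-- The trace `R` covers the sink set `S` (scaled by `β`): for every sink `(x, y)` the grid
point `(βx, βy)` belongs to the trace. -/
def covers {m : ℕ} (R : Trace m) {N : ℕ} (β : ℕ) (S : Fin N → ℕ × ℕ) : Prop :=
  ∀ i : Fin N, (((β * (S i).1 : ℕ) : ℝ), ((β * (S i).2 : ℕ) : ℝ)) ∈ R.carrier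

end Trace

/-- The flip from `C` to `C'` extends the chain path by the grid edge `e`. -/
def ExtendAdds (e : (ℕ × ℕ) × Bool) (C C' : Finset (ℕ × ℕ)) : Prop :=
  ∃ p q : ℕ × ℕ, IsPathEnd C p ∧ q ∉ C ∧ C' = insert q C ∧
    ((q = (p.1 + 1, p.2) ∧ e = (p, true)) ∨ (q = (p.1, p.2 + 1) ∧ e = (p, false)))

/-- The grid edge `e` coincides with a side of one of the boxes in `B`. -/
def IsBoxSide (B : Finset (ℕ × ℕ)) (e : (ℕ × ℕ) × Bool) : Prop :=
  if e.2 then e.1 ∈ B ∨ (e.1.1, e.1.2 - 1) ∈ B else e.1 ∈ B ∨ (e.1.1 - 1, e.1.2) ∈ B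

/-- `R` is the trace of the flip sequence `σ` on `P_D^+`: its boxes are those added by the
bend-changing flips of `σ`, and its edges are those added by the path-extending flips of `σ`,
except those coinciding with a side of a box of the trace. -/
def IsTraceOf {m : ℕ} {Q : SimplePolygon (2*m+1)} (R : Trace m) {k : ℕ}
    (σ : Fin (k+1) → Triangulation Q) : Prop :=
  (∀ c : ℕ × ℕ, c ∈ R.boxes ↔
    ∃ i : Fin k, BendSwapAt c (chainPathOf (σ i.castSucc)) (chainPathOf (σ i.succ))) ∧
  (∀ e : (ℕ × ℕ) × Bool, e ∈ R.edges ↔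
    ((∃ i : Fin k, ExtendAdds e (chainPathOf (σ i.castSucc)) (chainPathOf (σ i.succ))) ∧
      ¬ IsBoxSide R.boxes e))

/-- `A` is a shortest-path tree in the region `W` from `root` to the given sink points: a
rectilinear tree inside `W` that contains the root and all sinks, whose leaves lie at sinks,
and in which every sink is joined to the root by a monotone (hence shortest possible) path. -/
def IsShortestPathTreeIn (A : RectTree) (W : Set Pt) (root : Pt) (sinks : Set Pt) : Prop :=
  A.carrier ⊆ W ∧ root ∈ A.carrier ∧ (∀ s ∈ sinks, s ∈ A.carrier) ∧
  (∀ v : Pt, A.IsLeaf v → v ≠ root → v ∈ sinks) ∧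
  ∀ s ∈ sinks, MonoPathIn A.carrier root s

/-! ### Auxiliary lemmas for Statement 13 -/

section MyAux
open MeasureTheory

lemma my_seg_eq (s t : Seg) (hp : s.p = t.p) (hq : s.q = t.q) : s = t := by
  cases s; cases t; cases hp; cases hq; rfl

lemma my_translate_inj (w : Pt) : Function.Injective (Seg.translate w) := by
  intro s t h
  have hp : s.p + w = t.p + w := congrArg Seg.p h
  have hq : s.q + w = t.q + w := congrArg Seg.q h
  exact my_seg_eq s t (by simpa using hp) (by simpa using hq)

lemma my_set_translate (w : Pt) (s : Seg) :
    (s.translate w).set = (· + w) '' s.set := by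
  have h1 : ((· + w) : Pt → Pt) = (fun x => w + x) := funext fun x => add_comm x w
  rw [Seg.set, Seg.set, h1, segment_translate_image]
  show segment ℝ (s.p + w) (s.q + w) = _
  rw [add_comm s.p w, add_comm s.q w]

lemma my_mem_set_translate (w : Pt) (s : Seg) (x : Pt) :
    x ∈ (s.translate w).set ↔ x - w ∈ s.set := by
  rw [my_set_translate]
  constructor
  · rintro ⟨y, hy, rfl⟩; simpa using hy
  · intro h; exact ⟨x - w, h, by simp⟩

lemma my_mem_endpoints_translate (w : Pt) (s : Seg) (x : Pt) :
    x ∈ (s.translate w).endpoints ↔ x - w ∈ s.endpoints := by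
  simp only [Seg.endpoints, Seg.translate, Set.mem_insert_iff, Set.mem_singleton_iff]
  constructor
  · rintro (rfl | rfl) <;> simp
  · rintro (h | h) <;> [left; right] <;> rw [← h] <;> simp

lemma my_length_translate (w : Pt) (s : Seg) : (s.translate w).length = s.length := by
  simp only [Seg.length, Seg.translate, Prod.fst_add, Prod.snd_add]
  ring_nf

lemma my_measurable_segment (x y : Pt) : MeasurableSet (segment ℝ x y) := by
  rw [segment_eq_image]
  exact (isCompact_Icc.image (by fun_prop)).isClosed.measurableSet

lemma my_hm_seg (s : Seg) : μH[1] (Seg.set s) = ENNReal.ofReal s.length := by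
  rw [Seg.set, hausdorffMeasure_segment, edist_dist, Prod.dist_eq, Real.dist_eq, Real.dist_eq,
    Seg.length]
  rcases s.axis with h | h
  · rw [h]
    simp only [sub_self, abs_zero]
    rw [zero_add, sup_eq_right.mpr (abs_nonneg _), abs_sub_comm]
  · rw [h]
    simp only [sub_self, abs_zero]
    rw [add_zero, sup_eq_left.mpr (abs_nonneg _), abs_sub_comm]

lemma my_length_nonneg (s : Seg) : 0 ≤ s.length :=
  add_nonneg (abs_nonneg _) (abs_nonneg _)

lemma my_hm_singleton (x : Pt) : μH[1] ({x} : Set Pt) = 0 := by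
  have : ({x} : Set Pt) = segment ℝ x x := by simp [segment_same]
  rw [this, hausdorffMeasure_segment, edist_self]

lemma my_hm_carrier (T : RectTree) : μH[1] T.carrier = ENNReal.ofReal T.length := by
  rw [RectTree.carrier, measure_biUnion_finset₀ ?hd ?hm, RectTree.length,
    ENNReal.ofReal_sum_of_nonneg (fun s _ => my_length_nonneg s)]
  · exact Finset.sum_congr rfl fun s _ => my_hm_seg s
  case hd =>
    intro s hs t ht hst
    have h1 : Seg.set s ∩ Seg.set t ⊆ {s.p, s.q} :=
      (T.inter s hs t ht hst).trans fun x hx => hx.1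
    refine measure_mono_null h1 ?_
    have hle := measure_union_le (μ := μH[1]) ({s.p} : Set Pt) {s.q}
    rw [my_hm_singleton, my_hm_singleton, add_zero] at hle
    rw [Set.insert_eq]
    exact le_antisymm hle (zero_le)
  case hm =>
    intro s hs
    exact (my_measurable_segment _ _).nullMeasurableSet

lemma my_hm_gridEdge (e : (ℕ × ℕ) × Bool) : μH[1] (gridEdgeSet e) = 1 := by
  rcases e with ⟨⟨a, b⟩, hb⟩
  cases hb
  · rw [show gridEdgeSet ((a, b), false) = segment ℝ ((a:ℝ), (b:ℝ)) ((a:ℝ), (b:ℝ)+1) from rfl,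
      hausdorffMeasure_segment, edist_dist, Prod.dist_eq, Real.dist_eq, Real.dist_eq]
    norm_num
  · rw [show gridEdgeSet ((a, b), true) = segment ℝ ((a:ℝ), (b:ℝ)) ((a:ℝ)+1, (b:ℝ)) from rfl,
      hausdorffMeasure_segment, edist_dist, Prod.dist_eq, Real.dist_eq, Real.dist_eq]
    norm_num

lemma my_biUnion_translate (w : Pt) (F : Finset Seg) :
    (⋃ s ∈ F.image (Seg.translate w), Seg.set s) = (· + w) '' ⋃ s ∈ F, Seg.set s := by
  ext x
  simp only [Set.mem_iUnion, Finset.mem_image, Set.mem_image, exists_prop]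
  constructor
  · rintro ⟨s', ⟨s, hs, rfl⟩, hx⟩
    exact ⟨x - w, ⟨s, hs, (my_mem_set_translate w s x).mp hx⟩, by simp⟩
  · rintro ⟨y, ⟨s, hs, hy⟩, rfl⟩
    refine ⟨Seg.translate w s, ⟨s, hs, rfl⟩, ?_⟩
    rw [my_mem_set_translate]
    simpa using hy

lemma my_simplyConnected_of_homeo {X Y : Type} [TopologicalSpace X] [TopologicalSpace Y]
    (h : X ≃ₜ Y) (hX : SimplyConnectedSpace X) : SimplyConnectedSpace Y :=
  ⟨⟨(CategoryTheory.Equivalence.symm (FundamentalGroupoidFunctor.equivOfHomotopyEquiv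
      (X := TopCat.of X) (Y := TopCat.of Y) h.toHomotopyEquiv)).trans hX.equiv_unit.some⟩⟩

/-- Translation of a rectilinear tree. -/
def myTranslateTree (w : Pt) (A : RectTree) : RectTree where
  segs := A.segs.image (Seg.translate w)
  inter := by
    intro s' hs' t' ht' hne
    obtain ⟨s, hs, rfl⟩ := Finset.mem_image.mp hs'
    obtain ⟨t, ht, rfl⟩ := Finset.mem_image.mp ht'
    have hst : s ≠ t := fun h => hne (by rw [h])
    intro x hx
    have hx1 : x - w ∈ Seg.set s := (my_mem_set_translate w s x).mp hx.1
    have hx2 : x - w ∈ Seg.set t := (my_mem_set_translate w t x).mp hx.2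
    have h2 := A.inter s hs t ht hst ⟨hx1, hx2⟩
    exact ⟨(my_mem_endpoints_translate w s x).mpr h2.1,
           (my_mem_endpoints_translate w t x).mpr h2.2⟩
  conn := by
    rw [my_biUnion_translate]
    exact A.conn.image _ (continuous_id.add continuous_const).continuousOn
  acyclic := by
    rw [my_biUnion_translate]
    have hco : ((· + w) '' ⋃ s ∈ A.segs, Seg.set s)
        = (Homeomorph.addRight w) '' (⋃ s ∈ A.segs, Seg.set s) := by
      simp [Homeomorph.coe_addRight]
    rw [hco]
    exact my_simplyConnected_of_homeo ((Homeomorph.addRight w).image _) A.acyclic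

lemma myTranslateTree_segs (w : Pt) (A : RectTree) :
    (myTranslateTree w A).segs = A.segs.image (Seg.translate w) := rfl

lemma myTranslateTree_carrier (w : Pt) (A : RectTree) :
    (myTranslateTree w A).carrier = (· + w) '' A.carrier :=
  my_biUnion_translate w A.segs

lemma myTranslateTree_length (w : Pt) (A : RectTree) :
    (myTranslateTree w A).length = A.length := by
  rw [RectTree.length, RectTree.length, myTranslateTree_segs,
    Finset.sum_image (fun s _ t _ h => my_translate_inj w h)]
  exact Finset.sum_congr rfl fun s _ => my_length_translate w s

lemma my_mono_translate {A : Set Pt} {a b : Pt} (w : Pt) (h : MonoPathIn A a b) :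
    MonoPathIn ((· + w) '' A) (a + w) (b + w) := by
  obtain ⟨f, hc, h0, h1, hmem, hm1, hm2⟩ := h
  refine ⟨fun t => f t + w, hc.add continuousOn_const, by show f 0 + w = a + w; rw [h0],
    by show f 1 + w = b + w; rw [h1],
    fun t ht => ⟨f t, hmem t ht, rfl⟩, ?_, ?_⟩
  · intro t ht u hu htu
    simpa using add_le_add_right (hm1 ht hu htu) w.1
  · intro t ht u hu htu
    simpa using add_le_add_right (hm2 ht hu htu) w.2

lemma my_isLeaf_translate (w : Pt) (A : RectTree) {x : Pt}
    (h : (myTranslateTree w A).IsLeaf x) : A.IsLeaf (x - w) := by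
  obtain ⟨⟨s', ⟨hs'm, hs'e⟩, huniq⟩, hall⟩ := h
  rw [myTranslateTree_segs] at hs'm
  obtain ⟨s, hs, rfl⟩ := Finset.mem_image.mp hs'm
  constructor
  · refine ⟨s, ⟨hs, (my_mem_endpoints_translate w s x).mp hs'e⟩, ?_⟩
    rintro t ⟨htm, hte⟩
    have heq : Seg.translate w t = Seg.translate w s :=
      huniq _ ⟨by rw [myTranslateTree_segs]; exact Finset.mem_image_of_mem _ htm,
        (my_mem_endpoints_translate w t x).mpr hte⟩
    exact my_translate_inj w heq
  · intro t htm hxt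
    have h2 := hall (Seg.translate w t)
      (by rw [myTranslateTree_segs]; exact Finset.mem_image_of_mem _ htm)
      ((my_mem_set_translate w t x).mpr hxt)
    exact (my_mem_endpoints_translate w t x).mp h2


lemma my_length_le {m : ℕ} (R : Trace m) (hbox : R.boxes = ∅) (A : RectTree)
    (hsub : A.carrier ⊆ R.carrier) : A.length ≤ (R.edges.card : ℝ) := by
  have h1 : μH[1] A.carrier ≤ μH[1] R.carrier := measure_mono hsub
  have h2 : μH[1] R.carrier ≤ (R.edges.card : ENNReal) := by
    rw [Trace.carrier, traceCarrier, hbox]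
    have hempty : (⋃ c ∈ (∅ : Finset (ℕ × ℕ)), boxSet c) = (∅ : Set Pt) := by simp
    rw [hempty, Set.union_empty]
    refine le_trans (measure_biUnion_finset_le _ _) ?_
    rw [Finset.sum_congr rfl (fun e _ => my_hm_gridEdge e)]
    simp
  rw [my_hm_carrier] at h1
  have h3 := h1.trans h2
  rw [← ENNReal.ofReal_natCast] at h3
  exact (ENNReal.ofReal_le_ofReal_iff (Nat.cast_nonneg _)).mp h3

end MyAux

/-- Let `R` be a covering trace for `S` that contains no boxes, and let `A`
be a shortest-path tree in `R` from the root `(1,1)` to all the points `(βx, βy)` with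
`(x,y) ∈ S` (where `β = 2N`).  Then `A`, translated by `(-1,-1)`, is a rectilinear Steiner
arborescence for the set `{(βx - 1, βy - 1) : (x,y) ∈ S}`; in particular, this set has a
rectilinear Steiner arborescence of length at most `cost(R)/2`. -/
theorem boxless_trace_gives_RSA (n N : ℕ) (hN : 1 ≤ N) (S : Fin N → ℕ × ℕ)
    (hS : ∀ i, 1 ≤ (S i).1 ∧ (S i).1 ≤ n ∧ 1 ≤ (S i).2 ∧ (S i).2 ≤ n)
    (R : Trace (2*N*n)) (hcov : R.covers (2*N) S) (hbox : R.boxes = ∅)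
    (A : RectTree)
    (hA : IsShortestPathTreeIn A R.carrier ((1 : ℝ), (1 : ℝ))
      (Set.range fun i => (((2*N*(S i).1 : ℕ) : ℝ), ((2*N*(S i).2 : ℕ) : ℝ)))) :
    (∃ A' : RectTree, A'.segs = A.segs.image (Seg.translate ((-1 : ℝ), (-1 : ℝ))) ∧
      IsRSA A' ((0 : ℝ), (0 : ℝ))
        (Set.range fun i => (((2*N*(S i).1 - 1 : ℕ) : ℝ), ((2*N*(S i).2 - 1 : ℕ) : ℝ)))) ∧
    ∃ B : RectTree,
      IsRSA B ((0 : ℝ), (0 : ℝ))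
        (Set.range fun i => (((2*N*(S i).1 - 1 : ℕ) : ℝ), ((2*N*(S i).2 - 1 : ℕ) : ℝ))) ∧
      2 * B.length ≤ (R.cost : ℝ) := by
  obtain ⟨hsub, hroot, hsinks, hleaves, hmono⟩ := hA
  set w : Pt := ((-1 : ℝ), (-1 : ℝ)) with hw
  have hrw : ((1 : ℝ), (1 : ℝ)) + w = ((0 : ℝ), (0 : ℝ)) := by
    rw [hw]; norm_num [Prod.ext_iff]
  set A' := myTranslateTree w A with hA'
  have hcar : A'.carrier = (· + w) '' A.carrier := myTranslateTree_carrier w A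
  have hx1 : ∀ i : Fin N, 0 < 2*N*(S i).1 := fun i =>
    Nat.mul_pos (Nat.mul_pos (by norm_num) hN) (hS i).1
  have hy1 : ∀ i : Fin N, 0 < 2*N*(S i).2 := fun i =>
    Nat.mul_pos (Nat.mul_pos (by norm_num) hN) (hS i).2.2.1
  have hkey : ∀ i : Fin N,
      ((((2*N*(S i).1 : ℕ) : ℝ)), (((2*N*(S i).2 : ℕ) : ℝ))) + w
        = (((2*N*(S i).1 - 1 : ℕ) : ℝ), ((2*N*(S i).2 - 1 : ℕ) : ℝ)) := by
    intro i
    have h1 : (1:ℕ) ≤ 2*N*(S i).1 := hx1 i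
    have h2 : (1:ℕ) ≤ 2*N*(S i).2 := hy1 i
    rw [hw]
    simp only [Prod.mk_add_mk, Prod.mk.injEq]
    rw [Nat.cast_sub h1, Nat.cast_sub h2]
    push_cast
    constructor <;> ring
  have hRSA : IsRSA A' ((0 : ℝ), (0 : ℝ))
      (Set.range fun i => (((2*N*(S i).1 - 1 : ℕ) : ℝ), ((2*N*(S i).2 - 1 : ℕ) : ℝ))) := by
    refine ⟨?_, ?_, ?_⟩
    · rw [hcar, ← hrw]
      exact ⟨_, hroot, rfl⟩
    · intro x hx hx0
      have hleaf := my_isLeaf_translate w A hx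
      have hne : x - w ≠ ((1 : ℝ), (1 : ℝ)) := by
        intro hc
        apply hx0
        have hx2 : x = ((1 : ℝ), (1 : ℝ)) + w := by
          rw [← hc]; exact (sub_add_cancel x w).symm
        rw [hx2, hrw]
      obtain ⟨i, hi⟩ := hleaves _ hleaf hne
      refine ⟨i, ?_⟩
      have hxw : x = ((((2*N*(S i).1 : ℕ) : ℝ)), (((2*N*(S i).2 : ℕ) : ℝ))) + w := by
        show x = _
        rw [show ((((2*N*(S i).1 : ℕ) : ℝ)), (((2*N*(S i).2 : ℕ) : ℝ))) = x - w from hi]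
        exact (sub_add_cancel x w).symm
      show (((2*N*(S i).1 - 1 : ℕ) : ℝ), ((2*N*(S i).2 - 1 : ℕ) : ℝ)) = x
      rw [hxw, hkey i]
    · intro s hs
      obtain ⟨i, rfl⟩ := hs
      have hp := hmono _ ⟨i, rfl⟩
      have hp' := my_mono_translate w hp
      rw [← hcar, hrw, hkey i] at hp'
      exact hp'
  have hcost : (R.cost : ℝ) = 2 * (R.edges.card : ℝ) := by
    rw [Trace.cost, hbox, Finset.sum_empty, add_zero]
    push_cast
    ring
  refine ⟨⟨A', rfl, hRSA⟩, A', hRSA, ?_⟩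
  rw [hcost, hA', myTranslateTree_length]
  have hle := my_length_le R hbox A hsub
  linarith
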